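/- Fix ℓ⁻ ∈ ℕ and a skew partition τ/τ*. Let t be the semistandard signed tableau of shape τ/τ* constructed greedily: in each row i, place min(ℓ⁻, τ_i − τ*_i) negative entries −1, −2, ..., −min(ℓ⁻, ...) from left to right; then fill the remaining boxes of each column j from top to bottom with 1, 2, 3, .... Let (ω⁻, ω⁺) be the signed weight of t, where ω⁻_k counts entries −k and ω⁺_k counts entries k. Then ω⁻ and ω⁺ are both partitions (weakly decreasing), and for any semistandard signed tableau s of shape τ/τ* with negative entries from {−1,...,−ℓ⁻}, the concatenated signed weight of s is dominated by (ω⁻, ω⁺) in the dominance order on concatenated sequences (negative part first, padded to ℓ⁻ entries). -/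

import Mathlib

open scoped Classical

/-- A partition. -/
def IsPartition (f : ℕ → ℕ) : Prop :=
  (∀ i j, i ≤ j → f j ≤ f i) ∧ ∃ N, ∀ i, N ≤ i → f i = 0

/-- Box `(i, j)` (0-indexed) belongs to the skew shape `τ/τs`. -/
def InShape (τ τs : ℕ → ℕ) (i j : ℕ) : Prop := τs i ≤ j ∧ j < τ i

/-- The order `-1 < -2 < ⋯ < 1 < 2 < ⋯` on nonzero integers (weak comparison). -/
def sle (a b : ℤ) : Prop :=
  (a < 0 ∧ 0 < b) ∨ (a < 0 ∧ b < 0 ∧ b ≤ a) ∨ (0 < a ∧ 0 < b ∧ a ≤ b)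

/-- A semistandard signed tableau of skew shape `τ/τs`: nonzero entries exactly on the
shape, rows and columns weakly increasing for the order `-1 < -2 < ⋯ < 1 < 2 < ⋯`, equal
negative entries never adjacent in a row (vertical strips) and equal positive entries
never adjacent in a column (horizontal strips). -/
def IsSignedSSYT (τ τs : ℕ → ℕ) (T : ℕ → ℕ → ℤ) : Prop :=
  (∀ i j, InShape τ τs i j → T i j ≠ 0) ∧
  (∀ i j, ¬ InShape τ τs i j → T i j = 0) ∧
  (∀ i j, InShape τ τs i j → InShape τ τs i (j + 1) →
    sle (T i j) (T i (j + 1)) ∧ (T i j < 0 → T i j ≠ T i (j + 1))) ∧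
  (∀ i j, InShape τ τs i j → InShape τ τs (i + 1) j →
    sle (T i j) (T (i + 1) j) ∧ (0 < T i j → T i j ≠ T (i + 1) j))

/-- The greedy greatest semistandard signed tableau `t_l(τ/τs)`: in each row the first
`min(l, row length)` boxes receive `-1, -2, …` from left to right, and the remaining boxes
of each column receive `1, 2, 3, …` from top to bottom. -/
noncomputable def greatestT (l : ℕ) (τ τs : ℕ → ℕ) : ℕ → ℕ → ℤ :=
  fun i j =>
    if InShape τ τs i j then
      if j - τs i < l then -((j : ℤ) - (τs i : ℤ) + 1)
      else (Set.ncard {i' : ℕ | i' ≤ i ∧ InShape τ τs i' j ∧ l ≤ j - τs i'} : ℤ)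
    else 0

/-- `wtNeg τ τs T k` is the number of entries of `T` equal to `-(k+1)`; so this is the
negative part `α⁻` of the signed weight (0-indexed). -/
noncomputable def wtNeg (τ τs : ℕ → ℕ) (T : ℕ → ℕ → ℤ) (k : ℕ) : ℕ :=
  Set.ncard {p : ℕ × ℕ | InShape τ τs p.1 p.2 ∧ T p.1 p.2 = -((k : ℤ) + 1)}

/-- `wtPos τ τs T k` is the number of entries of `T` equal to `k+1`; the positive part
`α⁺` of the signed weight (0-indexed). -/
noncomputable def wtPos (τ τs : ℕ → ℕ) (T : ℕ → ℕ → ℤ) (k : ℕ) : ℕ :=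
  Set.ncard {p : ℕ × ℕ | InShape τ τs p.1 p.2 ∧ T p.1 p.2 = (k : ℤ) + 1}

/-- The (extended) dominance order on sequences. -/
def Dom (f g : ℕ → ℕ) : Prop :=
  ∀ k : ℕ, ∑ i ∈ Finset.range k, f i ≤ ∑ i ∈ Finset.range k, g i

/-- The concatenation `(a_1, …, a_l, b_1, b_2, …)` of a signed weight. -/
def concatW (l : ℕ) (a b : ℕ → ℕ) : ℕ → ℕ :=
  fun i => if i < l then a i else b (i - l)

namespace SW

noncomputable def aj (l : ℕ) (τs : ℕ → ℕ) (j : ℕ) : ℕ := sInf {i | τs i + l ≤ j}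
noncomputable def bj (τ : ℕ → ℕ) (j : ℕ) : ℕ := sInf {i | τ i ≤ j}

variable {l : ℕ} {τ τs : ℕ → ℕ}

lemma aj_le {i j : ℕ} (h : τs i + l ≤ j) : aj l τs j ≤ i := Nat.sInf_le h

lemma aj_spec (hτs : IsPartition τs) {j : ℕ} (hlj : l ≤ j) :
    τs (aj l τs j) + l ≤ j := by
  obtain ⟨N, hN⟩ := hτs.2
  have hne : Set.Nonempty {i | τs i + l ≤ j} := ⟨N, show τs N + l ≤ j by rw [hN N le_rfl]; omega⟩
  exact Nat.sInf_mem hne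

lemma bj_le {i j : ℕ} (h : τ i ≤ j) : bj τ j ≤ i := Nat.sInf_le h

lemma bj_spec (hτ : IsPartition τ) (j : ℕ) : τ (bj τ j) ≤ j := by
  obtain ⟨N, hN⟩ := hτ.2
  have hne : Set.Nonempty {i | τ i ≤ j} := ⟨N, show τ N ≤ j by rw [hN N le_rfl]; omega⟩
  exact Nat.sInf_mem hne

lemma shape_lt (hτ : IsPartition τ) {R i j : ℕ}
    (hR : ∀ i, R ≤ i → τ i = 0) (h : InShape τ τs i j) : i < R ∧ j < τ 0 := by
  constructor
  · by_contra hc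
    have h1 := hR i (by omega)
    have h2 := h.2; omega
  · have h1 := hτ.1 0 i (Nat.zero_le i)
    have h2 := h.2; omega

lemma shape_col (hτ : IsPartition τ) (hτs : IsPartition τs) {i1 i i2 j : ℕ}
    (h1 : InShape τ τs i1 j) (h2 : InShape τ τs i2 j) (ha : i1 ≤ i) (hb : i ≤ i2) :
    InShape τ τs i j :=
  ⟨le_trans (hτs.1 i1 i ha) h1.1, lt_of_lt_of_le h2.2 (hτ.1 i i2 hb)⟩

lemma shape_row {i j1 j j2 : ℕ} (h1 : InShape τ τs i j1) (h2 : InShape τ τs i j2)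
    (ha : j1 ≤ j) (hb : j ≤ j2) : InShape τ τs i j :=
  ⟨le_trans h1.1 ha, lt_of_le_of_lt hb h2.2⟩

lemma t_neg {i j : ℕ} (h : InShape τ τs i j) (hneg : j < τs i + l) :
    greatestT l τ τs i j = -((j : ℤ) - (τs i : ℤ) + 1) := by
  unfold greatestT
  rw [if_pos h, if_pos (by have := h.1; omega)]

lemma pos_set_eq (hτ : IsPartition τ) (hτs : IsPartition τs) {i j : ℕ}
    (h : InShape τ τs i j) (hpos : τs i + l ≤ j) :
    {i' : ℕ | i' ≤ i ∧ InShape τ τs i' j ∧ l ≤ j - τs i'} = Set.Icc (aj l τs j) i := by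
  ext i'
  simp only [Set.mem_setOf_eq, Set.mem_Icc]
  constructor
  · rintro ⟨h1, h2, h3⟩
    exact ⟨aj_le (by have := h2.1; omega), h1⟩
  · rintro ⟨h1, h2⟩
    have hs : τs i' ≤ τs (aj l τs j) := hτs.1 _ _ h1
    have hspec := aj_spec hτs (l := l) (j := j) (by omega)
    have ht : τ i ≤ τ i' := hτ.1 _ _ h2
    have hj := h.2
    exact ⟨h2, ⟨by omega, by omega⟩, by omega⟩

lemma t_pos (hτ : IsPartition τ) (hτs : IsPartition τs) {i j : ℕ}
    (h : InShape τ τs i j) (hpos : τs i + l ≤ j) :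
    greatestT l τ τs i j = ((i + 1 - aj l τs j : ℕ) : ℤ) := by
  unfold greatestT
  rw [if_pos h, if_neg (by have := h.1; omega), pos_set_eq hτ hτs h hpos,
    ← Finset.coe_Icc, Set.ncard_coe_finset, Nat.card_Icc]

lemma pb_iff (hτ : IsPartition τ) (hτs : IsPartition τs) {i j : ℕ} (hlj : l ≤ j) :
    (InShape τ τs i j ∧ τs i + l ≤ j) ↔ (aj l τs j ≤ i ∧ i < bj τ j) := by
  constructor
  · rintro ⟨hs, hp⟩
    refine ⟨aj_le hp, ?_⟩
    by_contra hc
    have h1 : τ i ≤ τ (bj τ j) := hτ.1 _ _ (by omega)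
    have h2 := bj_spec hτ (j := j)
    have h3 := hs.2
    omega
  · rintro ⟨h1, h2⟩
    have hs : τs i ≤ τs (aj l τs j) := hτs.1 _ _ h1
    have hspec := aj_spec hτs (l := l) (j := j) hlj
    have hτi : j < τ i := by
      by_contra hc
      have := bj_le (τ := τ) (i := i) (j := j) (by omega)
      omega
    exact ⟨⟨by omega, hτi⟩, by omega⟩

lemma t_neg_iff (hτ : IsPartition τ) (hτs : IsPartition τs) {i j : ℕ}
    (h : InShape τ τs i j) : greatestT l τ τs i j < 0 ↔ j < τs i + l := by
  by_cases hc : j < τs i + l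
  · rw [t_neg h hc]
    have := h.1
    constructor <;> intro <;> omega
  · rw [t_pos hτ hτs h (by omega)]
    constructor <;> intro h2 <;> omega

lemma t_pos_iff (hτ : IsPartition τ) (hτs : IsPartition τs) {i j : ℕ}
    (h : InShape τ τs i j) : 0 < greatestT l τ τs i j ↔ τs i + l ≤ j := by
  by_cases hc : j < τs i + l
  · rw [t_neg h hc]
    have := h.1
    constructor <;> intro <;> omega
  · rw [t_pos hτ hτs h (by omega)]
    have ha : aj l τs j ≤ i := aj_le (by omega)
    constructor <;> intro <;> omega

lemma t_bound (hτ : IsPartition τ) (hτs : IsPartition τs) {i j : ℕ}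
    (h : InShape τ τs i j) (hneg : greatestT l τ τs i j < 0) :
    -(l : ℤ) ≤ greatestT l τ τs i j := by
  have hc := (t_neg_iff hτ hτs h).1 hneg
  rw [t_neg h hc]
  have := h.1
  omega

end SW

namespace SW

variable {l : ℕ} {τ τs : ℕ → ℕ}

lemma t_ssyt (hτ : IsPartition τ) (hτs : IsPartition τs) :
    IsSignedSSYT τ τs (greatestT l τ τs) := by
  refine ⟨?_, ?_, ?_, ?_⟩
  · intro i j hs
    by_cases hc : j < τs i + l
    · rw [t_neg hs hc]
      have := hs.1; omega
    · rw [t_pos hτ hτs hs (by omega)]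
      have := aj_le (l := l) (τs := τs) (i := i) (j := j) (by omega)
      omega
  · intro i j hs
    unfold greatestT
    rw [if_neg hs]
  · intro i j h1 h2
    have hss := h1.1
    by_cases hc1 : j < τs i + l
    · by_cases hc2 : j + 1 < τs i + l
      · rw [t_neg h1 hc1, t_neg h2 hc2]
        unfold sle; omega
      · rw [t_neg h1 hc1, t_pos hτ hτs h2 (by omega)]
        have := aj_le (l := l) (τs := τs) (i := i) (j := j + 1) (by omega)
        unfold sle; omega
    · have hc2 : ¬ (j + 1 < τs i + l) := by omega
      rw [t_pos hτ hτs h1 (by omega), t_pos hτ hτs h2 (by omega)]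
      have ha1 := aj_le (l := l) (τs := τs) (i := i) (j := j) (by omega)
      have ha2 := aj_le (l := l) (τs := τs) (i := i) (j := j + 1) (by omega)
      have hmono : aj l τs (j + 1) ≤ aj l τs j := by
        apply Nat.sInf_le
        have := aj_spec hτs (l := l) (j := j) (by omega)
        show τs (aj l τs j) + l ≤ j + 1
        omega
      unfold sle; omega
  · intro i j h1 h2
    have hs1 := h1.1
    have hs2 := h2.1
    have hmono : τs (i + 1) ≤ τs i := hτs.1 i (i + 1) (by omega)
    by_cases hc1 : j < τs i + l
    · by_cases hc2 : j < τs (i + 1) + l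
      · rw [t_neg h1 hc1, t_neg h2 hc2]
        unfold sle; omega
      · rw [t_neg h1 hc1, t_pos hτ hτs h2 (by omega)]
        have := aj_le (l := l) (τs := τs) (i := i + 1) (j := j) (by omega)
        unfold sle; omega
    · have hc2 : ¬ (j < τs (i + 1) + l) := by omega
      rw [t_pos hτ hτs h1 (by omega), t_pos hτ hτs h2 (by omega)]
      have ha1 := aj_le (l := l) (τs := τs) (i := i) (j := j) (by omega)
      unfold sle; omega

lemma shape_set_finite (hτ : IsPartition τ) (P : ℕ × ℕ → Prop)
    (hP : ∀ p, P p → InShape τ τs p.1 p.2) : {p : ℕ × ℕ | P p}.Finite := by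
  obtain ⟨R, hR⟩ := hτ.2
  apply Set.Finite.subset ((Set.finite_Iio R).prod (Set.finite_Iio (τ 0)))
  intro p hp
  have := shape_lt hτ hR (hP p hp)
  exact ⟨this.1, this.2⟩

lemma antitone_of_succ {f : ℕ → ℕ} (h : ∀ k, f (k + 1) ≤ f k) :
    ∀ i j, i ≤ j → f j ≤ f i :=
  fun i j hij => antitone_nat_of_succ_le h hij

/-- On the shape, `t` takes value `-(k+1)` iff it's a negative box at offset `k`. -/
lemma t_eq_neg_iff (hτ : IsPartition τ) (hτs : IsPartition τs) {i j k : ℕ}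
    (h : InShape τ τs i j) :
    greatestT l τ τs i j = -((k : ℤ) + 1) ↔ (j = τs i + k ∧ k < l) := by
  by_cases hc : j < τs i + l
  · rw [t_neg h hc]
    have := h.1
    constructor <;> intro <;> omega
  · rw [t_pos hτ hτs h (by omega)]
    constructor <;> intro <;> omega

lemma t_eq_pos_iff (hτ : IsPartition τ) (hτs : IsPartition τs) {i j k : ℕ}
    (h : InShape τ τs i j) :
    greatestT l τ τs i j = (k : ℤ) + 1 ↔ (τs i + l ≤ j ∧ i = aj l τs j + k) := by
  by_cases hc : j < τs i + l
  · rw [t_neg h hc]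
    have := h.1
    constructor <;> intro <;> omega
  · rw [t_pos hτ hτs h (by omega)]
    have := aj_le (l := l) (τs := τs) (i := i) (j := j) (by omega)
    constructor <;> intro <;> omega

lemma wtNeg_t_partition (hτ : IsPartition τ) (hτs : IsPartition τs) :
    IsPartition (wtNeg τ τs (greatestT l τ τs)) := by
  constructor
  · apply antitone_of_succ
    intro k
    unfold wtNeg
    have hfin : {p : ℕ × ℕ | InShape τ τs p.1 p.2 ∧
        greatestT l τ τs p.1 p.2 = -((k : ℤ) + 1)}.Finite :=
      shape_set_finite hτ _ (fun p h => h.1)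
    apply Set.ncard_le_ncard_of_injOn (fun p => (p.1, p.2 - 1)) _ _ hfin
    · rintro ⟨i, j⟩ ⟨hs, hv⟩
      dsimp only at hs hv ⊢
      rw [t_eq_neg_iff hτ hτs hs] at hv
      have hs' : InShape τ τs i (j - 1) := ⟨by omega, by have := hs.2; omega⟩
      refine ⟨hs', ?_⟩
      rw [t_eq_neg_iff hτ hτs hs']
      omega
    · rintro ⟨i1, j1⟩ ⟨hs1, hv1⟩ ⟨i2, j2⟩ ⟨hs2, hv2⟩ hf
      dsimp only at hs1 hv1 hs2 hv2 hf
      rw [t_eq_neg_iff hτ hτs hs1] at hv1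
      rw [t_eq_neg_iff hτ hτs hs2] at hv2
      simp only [Prod.mk.injEq] at hf ⊢
      omega
  · refine ⟨l, fun k hk => ?_⟩
    unfold wtNeg
    convert Set.ncard_empty (ℕ × ℕ)
    ext ⟨i, j⟩
    simp only [Set.mem_setOf_eq, Set.mem_empty_iff_false, iff_false, not_and]
    intro hs hv
    rw [t_eq_neg_iff hτ hτs hs] at hv
    omega

lemma wtPos_t_partition (hτ : IsPartition τ) (hτs : IsPartition τs) :
    IsPartition (wtPos τ τs (greatestT l τ τs)) := by
  constructor
  · apply antitone_of_succ
    intro k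
    unfold wtPos
    have hfin : {p : ℕ × ℕ | InShape τ τs p.1 p.2 ∧
        greatestT l τ τs p.1 p.2 = (k : ℤ) + 1}.Finite :=
      shape_set_finite hτ _ (fun p h => h.1)
    apply Set.ncard_le_ncard_of_injOn (fun p => (p.1 - 1, p.2)) _ _ hfin
    · rintro ⟨i, j⟩ ⟨hs, hv⟩
      dsimp only at hs hv ⊢
      rw [t_eq_pos_iff hτ hτs hs (k := k + 1)] at hv
      have hlj : l ≤ j := by have := hs.1; omega
      have hbi : i < bj τ j := ((pb_iff hτ hτs hlj).1 ⟨hs, hv.1⟩).2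
      have hs' : InShape τ τs (i - 1) j ∧ τs (i - 1) + l ≤ j := by
        rw [pb_iff hτ hτs hlj]
        omega
      refine ⟨hs'.1, ?_⟩
      rw [t_eq_pos_iff hτ hτs hs'.1]
      exact ⟨hs'.2, by omega⟩
    · rintro ⟨i1, j1⟩ ⟨hs1, hv1⟩ ⟨i2, j2⟩ ⟨hs2, hv2⟩ hf
      dsimp only at hs1 hv1 hs2 hv2 hf
      rw [t_eq_pos_iff hτ hτs hs1 (k := k + 1)] at hv1
      rw [t_eq_pos_iff hτ hτs hs2 (k := k + 1)] at hv2
      simp only [Prod.mk.injEq] at hf ⊢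
      refine ⟨?_, hf.2⟩
      have hj : j1 = j2 := hf.2
      subst hj
      omega
  · obtain ⟨N, hN⟩ := hτ.2
    refine ⟨N, fun k hk => ?_⟩
    unfold wtPos
    convert Set.ncard_empty (ℕ × ℕ)
    ext ⟨i, j⟩
    simp only [Set.mem_setOf_eq, Set.mem_empty_iff_false, iff_false, not_and]
    intro hs hv
    rw [t_eq_pos_iff hτ hτs hs] at hv
    have := (shape_lt hτ hN hs).1
    omega

end SW

namespace SW

variable {l : ℕ} {τ τs : ℕ → ℕ} {T : ℕ → ℕ → ℤ}

/-- Convert an `ncard` of a sub-shape set to a `Finset.card` over a bounding box. -/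
lemma ncard_filter (hτ : IsPartition τ) {R : ℕ} (hR : ∀ i, R ≤ i → τ i = 0)
    (P : ℕ × ℕ → Prop) [DecidablePred P] (hP : ∀ p, P p → InShape τ τs p.1 p.2) :
    {p : ℕ × ℕ | P p}.ncard
      = ((Finset.range R ×ˢ Finset.range (τ 0)).filter P).card := by
  rw [← Set.ncard_coe_finset]
  congr 1
  ext p
  simp only [Finset.coe_filter, Finset.mem_product, Finset.mem_range, Set.mem_setOf_eq]
  constructor
  · intro h
    exact ⟨shape_lt hτ hR (hP p h), h⟩
  · intro h
    exact h.2

lemma card_box_rows (R C : ℕ) (P : ℕ × ℕ → Prop) [DecidablePred P] :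
    ((Finset.range R ×ˢ Finset.range C).filter P).card
      = ∑ i ∈ Finset.range R, ((Finset.range C).filter (fun j => P (i, j))).card := by
  rw [Finset.card_filter, Finset.sum_product]
  simp only [Finset.card_filter]

lemma card_box_cols (R C : ℕ) (P : ℕ × ℕ → Prop) [DecidablePred P] :
    ((Finset.range R ×ˢ Finset.range C).filter P).card
      = ∑ j ∈ Finset.range C, ((Finset.range R).filter (fun i => P (i, j))).card := by
  rw [Finset.card_filter, Finset.sum_product, Finset.sum_comm]
  simp only [Finset.card_filter]

/-- Partial sums of `wtNeg` count entries in `[-M, -1]`. -/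
lemma sum_wtNeg (hτ : IsPartition τ) {R : ℕ} (hR : ∀ i, R ≤ i → τ i = 0)
    (T : ℕ → ℕ → ℤ) (M : ℕ) :
    ∑ m ∈ Finset.range M, wtNeg τ τs T m
      = ((Finset.range R ×ˢ Finset.range (τ 0)).filter
          (fun p => InShape τ τs p.1 p.2 ∧ -(M : ℤ) ≤ T p.1 p.2 ∧ T p.1 p.2 < 0)).card := by
  have h1 : ∀ m ∈ Finset.range M, wtNeg τ τs T m
      = ((Finset.range R ×ˢ Finset.range (τ 0)).filter
          (fun p => InShape τ τs p.1 p.2 ∧ T p.1 p.2 = -((m : ℤ) + 1))).card := by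
    intro m _
    exact ncard_filter hτ hR _ (fun p h => h.1)
  rw [Finset.sum_congr rfl h1, ← Finset.card_biUnion]
  · congr 1
    ext ⟨i, j⟩
    simp only [Finset.mem_biUnion, Finset.mem_filter, Finset.mem_range, Finset.mem_product]
    constructor
    · rintro ⟨m, hm, ⟨hbox, hs, hv⟩⟩
      refine ⟨hbox, hs, by omega, by omega⟩
    · rintro ⟨hbox, hs, h1, h2⟩
      refine ⟨(-(T i j) - 1).toNat, ?_, hbox, hs, ?_⟩ <;> omega
  · intro x _ y _ hxy
    unfold Function.onFun
    rw [Finset.disjoint_left]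
    intro p hp hq
    simp only [Finset.mem_filter] at hp hq
    have h1 := hp.2.2
    have h2 := hq.2.2
    apply hxy
    omega

/-- Partial sums of `wtPos` count entries in `[1, M]`. -/
lemma sum_wtPos (hτ : IsPartition τ) {R : ℕ} (hR : ∀ i, R ≤ i → τ i = 0)
    (T : ℕ → ℕ → ℤ) (M : ℕ) :
    ∑ m ∈ Finset.range M, wtPos τ τs T m
      = ((Finset.range R ×ˢ Finset.range (τ 0)).filter
          (fun p => InShape τ τs p.1 p.2 ∧ 1 ≤ T p.1 p.2 ∧ T p.1 p.2 ≤ (M : ℤ))).card := by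
  have h1 : ∀ m ∈ Finset.range M, wtPos τ τs T m
      = ((Finset.range R ×ˢ Finset.range (τ 0)).filter
          (fun p => InShape τ τs p.1 p.2 ∧ T p.1 p.2 = ((m : ℤ) + 1))).card := by
    intro m _
    exact ncard_filter hτ hR _ (fun p h => h.1)
  rw [Finset.sum_congr rfl h1, ← Finset.card_biUnion]
  · congr 1
    ext ⟨i, j⟩
    simp only [Finset.mem_biUnion, Finset.mem_filter, Finset.mem_range, Finset.mem_product]
    constructor
    · rintro ⟨m, hm, ⟨hbox, hs, hv⟩⟩
      refine ⟨hbox, hs, by omega, by omega⟩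
    · rintro ⟨hbox, hs, h1, h2⟩
      refine ⟨(T i j - 1).toNat, ?_, hbox, hs, ?_⟩ <;> omega
  · intro x _ y _ hxy
    unfold Function.onFun
    rw [Finset.disjoint_left]
    intro p hp hq
    simp only [Finset.mem_filter] at hp hq
    have h1 := hp.2.2
    have h2 := hq.2.2
    apply hxy
    omega

/-- Along a row, entries to the left of a negative entry are negative, and values
strictly decrease (as integers) rightwards among negatives. -/
lemma row_neg_chain (hT : IsSignedSSYT τ τs T) {i j d : ℕ}
    (h1 : InShape τ τs i j) (h2 : InShape τ τs i (j + d)) (hneg : T i (j + d) < 0) :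
    T i j < 0 ∧ T i (j + d) ≤ T i j - d := by
  induction d with
  | zero => exact ⟨hneg, by simpa using le_refl (T i j)⟩
  | succ d ih =>
    have hmid : InShape τ τs i (j + d) := shape_row h1 h2 (by omega) (by omega)
    have hrow := hT.2.2.1 i (j + d) hmid h2
    unfold sle at hrow
    have hstep : T i (j + d) < 0 ∧ T i (j + (d + 1)) ≤ T i (j + d) - 1 := by
      have : j + (d + 1) = (j + d) + 1 := by omega
      rw [this] at hneg ⊢
      omega
    have := ih hmid hstep.1
    push_cast
    push_cast at this
    omega

/-- Down a column, entries below a positive entry are positive and strictly increase. -/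
lemma col_pos_chain (hτ : IsPartition τ) (hτs : IsPartition τs)
    (hT : IsSignedSSYT τ τs T) {i j d : ℕ}
    (h1 : InShape τ τs i j) (h2 : InShape τ τs (i + d) j) (hpos : 0 < T i j) :
    0 < T (i + d) j ∧ T i j + d ≤ T (i + d) j := by
  induction d with
  | zero => exact ⟨hpos, by simpa using le_refl (T i j)⟩
  | succ d ih =>
    have hmid : InShape τ τs (i + d) j := shape_col hτ hτs h1 h2 (by omega) (by omega)
    have ihh := ih hmid
    have hcol := hT.2.2.2 (i + d) j hmid (by rw [show i + d + 1 = i + (d + 1) by omega]; exact h2)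
    unfold sle at hcol
    have : i + (d + 1) = (i + d) + 1 := by omega
    rw [this]
    push_cast
    push_cast at ihh
    omega

end SW

namespace SW

variable {l : ℕ} {τ τs : ℕ → ℕ} {T : ℕ → ℕ → ℤ}

/-- Per-column inequality: negatives plus small positives of `T` are at most those of `t`. -/
lemma col_key (hτ : IsPartition τ) (hτs : IsPartition τs) {R : ℕ}
    (hR : ∀ i, R ≤ i → τ i = 0) (hT : IsSignedSSYT τ τs T)
    (hb : ∀ i j, InShape τ τs i j → T i j < 0 → -(l : ℤ) ≤ T i j) (j m : ℕ) :
    ((Finset.range R).filter (fun i => InShape τ τs i j ∧ -(l : ℤ) ≤ T i j ∧ T i j < 0)).card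
      + ((Finset.range R).filter
          (fun i => InShape τ τs i j ∧ 1 ≤ T i j ∧ T i j ≤ (m : ℤ))).card
    ≤ ((Finset.range R).filter (fun i => InShape τ τs i j ∧
          -(l : ℤ) ≤ greatestT l τ τs i j ∧ greatestT l τ τs i j < 0)).card
      + ((Finset.range R).filter (fun i => InShape τ τs i j ∧
          1 ≤ greatestT l τ τs i j ∧ greatestT l τ τs i j ≤ (m : ℤ))).card := by
  set t := greatestT l τ τs with ht_def
  -- (1) the small positives of T number at most m
  have hπm : ((Finset.range R).filter
      (fun i => InShape τ τs i j ∧ 1 ≤ T i j ∧ T i j ≤ (m : ℤ))).card ≤ m := by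
    have hcard : ((Finset.range R).filter
        (fun i => InShape τ τs i j ∧ 1 ≤ T i j ∧ T i j ≤ (m : ℤ))).card
        ≤ (Finset.Icc 1 m).card := by
      apply Finset.card_le_card_of_injOn (fun i => (T i j).toNat)
      · intro i hi
        simp only [Finset.mem_coe, Finset.mem_filter] at hi
        simp only [Finset.mem_coe, Finset.mem_Icc]
        omega
      · intro a ha b hb' heq
        simp only [Finset.coe_filter, Set.mem_setOf_eq] at ha hb'
        by_contra hne
        have key : ∀ x y : ℕ, x < y → InShape τ τs x j → InShape τ τs y j →
            0 < T x j → 0 < T y j → (T x j).toNat ≠ (T y j).toNat := by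
          intro x y hxy hsx hsy hpx hpy
          obtain ⟨d, rfl⟩ : ∃ d, y = x + d := ⟨y - x, by omega⟩
          have := col_pos_chain hτ hτs hT hsx hsy hpx
          omega
        rcases Nat.lt_or_ge a b with h | h
        · exact key a b h ha.2.1 hb'.2.1 (by omega) (by omega) heq
        · exact key b a (by omega) hb'.2.1 ha.2.1 (by omega) (by omega) heq.symm
    rwa [Nat.card_Icc, Nat.add_sub_cancel] at hcard
  -- (2) negatives and small positives of T are disjoint subsets of the column
  have hdisj : ((Finset.range R).filter
        (fun i => InShape τ τs i j ∧ -(l : ℤ) ≤ T i j ∧ T i j < 0)).card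
      + ((Finset.range R).filter
          (fun i => InShape τ τs i j ∧ 1 ≤ T i j ∧ T i j ≤ (m : ℤ))).card
      ≤ ((Finset.range R).filter (fun i => InShape τ τs i j)).card := by
    rw [← Finset.card_union_of_disjoint]
    · apply Finset.card_le_card
      intro x hx
      simp only [Finset.mem_union, Finset.mem_filter] at hx ⊢
      tauto
    · rw [Finset.disjoint_left]
      intro x hx hy
      simp only [Finset.mem_filter] at hx hy
      omega
  -- (3) columnwise, T has no more negatives than t
  have hν : ((Finset.range R).filter
        (fun i => InShape τ τs i j ∧ -(l : ℤ) ≤ T i j ∧ T i j < 0)).card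
      ≤ ((Finset.range R).filter
        (fun i => InShape τ τs i j ∧ -(l : ℤ) ≤ t i j ∧ t i j < 0)).card := by
    apply Finset.card_le_card
    intro i hi
    simp only [Finset.mem_filter] at hi ⊢
    obtain ⟨hiR, hs, hb1, hb2⟩ := hi
    have hcl : j < τs i + l := by
      by_contra hcl'
      have hstart : InShape τ τs i (τs i) := ⟨le_rfl, by have := hs.1; have := hs.2; omega⟩
      have hend : InShape τ τs i (τs i + (j - τs i)) := by
        rw [show τs i + (j - τs i) = j by have := hs.1; omega]
        exact hs
      have hneg' : T i (τs i + (j - τs i)) < 0 := by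
        rw [show τs i + (j - τs i) = j by have := hs.1; omega]
        exact hb2
      have hchain := row_neg_chain hT hstart hend hneg'
      rw [show τs i + (j - τs i) = j by have := hs.1; omega] at hchain
      have h1 := hchain.1
      have h2 := hchain.2
      have := hs.1
      omega
    have htneg : t i j < 0 := by
      rw [ht_def, t_neg hs hcl]
      have := hs.1
      omega
    exact ⟨hiR, hs, t_bound hτ hτs hs htneg, htneg⟩
  -- (4) column of t : negatives + positive boxes = column size
  have hiff1 : ∀ i ∈ Finset.range R,
      (InShape τ τs i j ∧ -(l : ℤ) ≤ t i j ∧ t i j < 0) ↔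
        (InShape τ τs i j ∧ j < τs i + l) := by
    intro i _
    constructor
    · rintro ⟨hs, _, hneg⟩
      exact ⟨hs, (t_neg_iff hτ hτs hs).1 hneg⟩
    · rintro ⟨hs, hc⟩
      have hneg : t i j < 0 := (t_neg_iff hτ hτs hs).2 hc
      exact ⟨hs, t_bound hτ hτs hs hneg, hneg⟩
  have hνt_eq : ((Finset.range R).filter
        (fun i => InShape τ τs i j ∧ -(l : ℤ) ≤ t i j ∧ t i j < 0))
      = ((Finset.range R).filter (fun i => InShape τ τs i j ∧ j < τs i + l)) :=
    Finset.filter_congr (fun i hi => hiff1 i hi)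
  have hsplit : ((Finset.range R).filter (fun i => InShape τ τs i j ∧ j < τs i + l)).card
      + ((Finset.range R).filter (fun i => InShape τ τs i j ∧ ¬ (j < τs i + l))).card
      = ((Finset.range R).filter (fun i => InShape τ τs i j)).card := by
    rw [← Finset.filter_filter, ← Finset.filter_filter]
    exact Finset.card_filter_add_card_filter_not (fun i => j < τs i + l)
  -- (5) t has at least min m (number of positive boxes) small positives in the column
  have hπt : min m (((Finset.range R).filter
        (fun i => InShape τ τs i j ∧ ¬ (j < τs i + l))).card)
      ≤ ((Finset.range R).filter
          (fun i => InShape τ τs i j ∧ 1 ≤ t i j ∧ t i j ≤ (m : ℤ))).card := by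
    by_cases hlj : l ≤ j
    · have hbjR : bj τ j ≤ R := bj_le (by rw [hR R le_rfl]; omega)
      have hpos_eq : ((Finset.range R).filter
          (fun i => InShape τ τs i j ∧ ¬ (j < τs i + l)))
          = Finset.Ico (aj l τs j) (bj τ j) := by
        ext i
        simp only [Finset.mem_filter, Finset.mem_range, Finset.mem_Ico]
        constructor
        · rintro ⟨hiR, hs, hc⟩
          exact (pb_iff hτ hτs hlj).1 ⟨hs, by omega⟩
        · intro h
          have := (pb_iff hτ hτs hlj).2 h
          exact ⟨by omega, this.1, by omega⟩
      have hπt_eq : ((Finset.range R).filter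
          (fun i => InShape τ τs i j ∧ 1 ≤ t i j ∧ t i j ≤ (m : ℤ)))
          = Finset.Ico (aj l τs j) (min (bj τ j) (aj l τs j + m)) := by
        ext i
        simp only [Finset.mem_filter, Finset.mem_range, Finset.mem_Ico]
        constructor
        · rintro ⟨hiR, hs, h1, h2⟩
          rw [ht_def] at h1
          have hpb : τs i + l ≤ j := (t_pos_iff hτ hτs hs).1 (by omega)
          have hab := (pb_iff hτ hτs hlj).1 ⟨hs, hpb⟩
          rw [ht_def, t_pos hτ hτs hs hpb] at h2
          have : i + 1 - aj l τs j ≤ m := by exact_mod_cast h2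
          omega
        · intro h
          have hpb := (pb_iff hτ hτs hlj).2 ⟨h.1, by omega⟩
          have hval : t i j = ((i + 1 - aj l τs j : ℕ) : ℤ) := by
            rw [ht_def]; exact t_pos hτ hτs hpb.1 hpb.2
          refine ⟨by omega, hpb.1, ?_, ?_⟩ <;> rw [hval]
          · have := h.1; omega
          · have h2 : i + 1 - aj l τs j ≤ m := by omega
            exact_mod_cast h2
      rw [hpos_eq, hπt_eq, Nat.card_Ico, Nat.card_Ico]
      omega
    · have hzero : ((Finset.range R).filter
          (fun i => InShape τ τs i j ∧ ¬ (j < τs i + l))) = ∅ := by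
        apply Finset.filter_eq_empty_iff.2
        intro i _
        intro hcon
        omega
      rw [hzero]
      simp
  rw [hνt_eq] at hν ⊢
  omega

end SW

namespace SW

variable {l : ℕ} {τ τs : ℕ → ℕ} {T : ℕ → ℕ → ℤ}

/-- Per-row inequality: entries in `[-k, -1]` of `T` are at most those of `t` (`k ≤ l`). -/
lemma row_key (hτ : IsPartition τ) (hτs : IsPartition τs) (hsub : ∀ i, τs i ≤ τ i)
    (hT : IsSignedSSYT τ τs T) {k : ℕ} (hkl : k ≤ l) (i : ℕ) :
    ((Finset.range (τ 0)).filter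
        (fun j => InShape τ τs i j ∧ -(k : ℤ) ≤ T i j ∧ T i j < 0)).card
      ≤ ((Finset.range (τ 0)).filter (fun j => InShape τ τs i j ∧
          -(k : ℤ) ≤ greatestT l τ τs i j ∧ greatestT l τ τs i j < 0)).card := by
  have hτ0 : τ i ≤ τ 0 := hτ.1 0 i (Nat.zero_le i)
  have hRHS : ((Finset.range (τ 0)).filter (fun j => InShape τ τs i j ∧
      -(k : ℤ) ≤ greatestT l τ τs i j ∧ greatestT l τ τs i j < 0))
      = Finset.Ico (τs i) (min (τ i) (τs i + k)) := by
    ext j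
    simp only [Finset.mem_filter, Finset.mem_range, Finset.mem_Ico]
    constructor
    · rintro ⟨hjC, hs, h1, h2⟩
      have hc : j < τs i + l := (t_neg_iff hτ hτs hs).1 h2
      rw [t_neg hs hc] at h1
      have hs1 := hs.1
      have hs2 := hs.2
      omega
    · intro h
      have hs : InShape τ τs i j := ⟨h.1, by omega⟩
      have hc : j < τs i + l := by omega
      rw [t_neg hs hc]
      have hs2 := hs.2
      refine ⟨by omega, hs, by omega, by omega⟩
  have hk : ((Finset.range (τ 0)).filter
      (fun j => InShape τ τs i j ∧ -(k : ℤ) ≤ T i j ∧ T i j < 0)).card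
      ≤ (Finset.Icc 1 k).card := by
    apply Finset.card_le_card_of_injOn (fun j => (-(T i j)).toNat)
    · intro j hj
      simp only [Finset.mem_coe, Finset.mem_filter] at hj
      simp only [Finset.mem_coe, Finset.mem_Icc]
      omega
    · intro a ha b hb heq
      simp only [Finset.coe_filter, Set.mem_setOf_eq] at ha hb
      by_contra hne
      have key : ∀ x y : ℕ, x < y → InShape τ τs i x → InShape τ τs i y →
          T i x < 0 → T i y < 0 → (-(T i x)).toNat ≠ (-(T i y)).toNat := by
        intro x y hxy hsx hsy hnx hny
        obtain ⟨d, rfl⟩ : ∃ d, y = x + d := ⟨y - x, by omega⟩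
        have := row_neg_chain hT hsx hsy hny
        omega
      rcases Nat.lt_or_ge a b with h | h
      · exact key a b h ha.2.1 hb.2.1 (by omega) (by omega) heq
      · exact key b a (by omega) hb.2.1 ha.2.1 (by omega) (by omega) heq.symm
  have hrow : ((Finset.range (τ 0)).filter
      (fun j => InShape τ τs i j ∧ -(k : ℤ) ≤ T i j ∧ T i j < 0)).card
      ≤ (Finset.Ico (τs i) (τ i)).card := by
    apply Finset.card_le_card
    intro j hj
    simp only [Finset.mem_filter, Finset.mem_Ico] at hj ⊢
    exact ⟨hj.2.1.1, hj.2.1.2⟩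
  rw [hRHS, Nat.card_Ico]
  rw [Nat.card_Icc] at hk
  rw [Nat.card_Ico] at hrow
  have := hsub i
  omega

end SW


/-- The greedily constructed tableau `t = t_l(τ/τs)` is a semistandard
signed tableau, its signed weight `(ω⁻, ω⁺)` consists of two partitions, and the
(concatenated) signed weight of every semistandard signed tableau of shape `τ/τs` with
negative entries from `{-1, …, -l}` is dominated by that of `t`. -/
theorem greatest_signed_weight (l : ℕ) (τ τs : ℕ → ℕ)
    (hτ : IsPartition τ) (hτs : IsPartition τs) (hsub : ∀ i, τs i ≤ τ i) :
    IsSignedSSYT τ τs (greatestT l τ τs) ∧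
    IsPartition (wtNeg τ τs (greatestT l τ τs)) ∧
    IsPartition (wtPos τ τs (greatestT l τ τs)) ∧
    (∀ T : ℕ → ℕ → ℤ, IsSignedSSYT τ τs T →
      (∀ i j, InShape τ τs i j → T i j < 0 → -(l : ℤ) ≤ T i j) →
      Dom (concatW l (wtNeg τ τs T) (wtPos τ τs T))
        (concatW l (wtNeg τ τs (greatestT l τ τs)) (wtPos τ τs (greatestT l τ τs)))) := by
  refine ⟨SW.t_ssyt hτ hτs, SW.wtNeg_t_partition hτ hτs, SW.wtPos_t_partition hτ hτs, ?_⟩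
  intro T hT hb k
  obtain ⟨R, hR⟩ := hτ.2
  by_cases hkl : k ≤ l
  · have hl : ∀ S : ℕ → ℕ → ℤ,
        ∑ i ∈ Finset.range k, concatW l (wtNeg τ τs S) (wtPos τ τs S) i
          = ∑ m ∈ Finset.range k, wtNeg τ τs S m := by
      intro S
      refine Finset.sum_congr rfl (fun i hi => ?_)
      simp only [Finset.mem_range] at hi
      unfold concatW
      rw [if_pos (by omega)]
    rw [hl T, hl (greatestT l τ τs), SW.sum_wtNeg hτ hR T k, SW.sum_wtNeg hτ hR _ k,
      SW.card_box_rows, SW.card_box_rows]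
    apply Finset.sum_le_sum
    intro i _
    exact SW.row_key hτ hτs hsub hT hkl i
  · have hsplit : ∀ S : ℕ → ℕ → ℤ,
        ∑ i ∈ Finset.range k, concatW l (wtNeg τ τs S) (wtPos τ τs S) i
          = ∑ m ∈ Finset.range l, wtNeg τ τs S m
            + ∑ m ∈ Finset.range (k - l), wtPos τ τs S m := by
      intro S
      rw [← Finset.sum_range_add_sum_Ico _ (show l ≤ k by omega)]
      congr 1
      · refine Finset.sum_congr rfl (fun i hi => ?_)
        simp only [Finset.mem_range] at hi
        unfold concatW
        rw [if_pos (by omega)]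
      · rw [Finset.sum_Ico_eq_sum_range]
        refine Finset.sum_congr rfl (fun i hi => ?_)
        unfold concatW
        rw [if_neg (by omega)]
        congr 1
        omega
    rw [hsplit T, hsplit (greatestT l τ τs),
      SW.sum_wtNeg hτ hR T l, SW.sum_wtNeg hτ hR _ l,
      SW.sum_wtPos hτ hR T (k - l), SW.sum_wtPos hτ hR _ (k - l),
      SW.card_box_cols, SW.card_box_cols, SW.card_box_cols, SW.card_box_cols,
      ← Finset.sum_add_distrib, ← Finset.sum_add_distrib]
    apply Finset.sum_le_sum
    intro j _
    exact SW.col_key hτ hτs hR hT hb j (k - l)
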